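/- Let 𝔣 be a finite-dimensional real Lie algebra with negative definite Killing form B, let ⟨·,·⟩ = −B, and let X₁,…,X_p be a basis of 𝔣 that is orthonormal with respect to ⟨·,·⟩, where p = dim 𝔣. Then the structure constants C_{ab}^c = ⟨[X_a,X_b],X_c⟩ satisfy Σ_{a,b,c=1}^{p} (C_{ab}^c)² = p. -/

import Mathlib

/-- For an orthonormal basis (w.r.t. the minus Killing form) of a
compact-type Lie algebra of dimension p, the squared structure constants sum to p. -/
theorem stmt_3 (𝔣 : Type*) [LieRing 𝔣] [LieAlgebra ℝ 𝔣] [FiniteDimensional ℝ 𝔣]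
    (hneg : ∀ X : 𝔣, X ≠ 0 → killingForm ℝ 𝔣 X X < 0)
    (p : ℕ) (hp : p = Module.finrank ℝ 𝔣)
    (X : Module.Basis (Fin p) ℝ 𝔣)
    (horth : ∀ a b : Fin p,
      -(killingForm ℝ 𝔣 (X a) (X b)) = if a = b then 1 else 0) :
    ∑ a : Fin p, ∑ b : Fin p, ∑ c : Fin p,
      (-(killingForm ℝ 𝔣 ⁅X a, X b⁆ (X c))) ^ 2 = (p : ℝ) := by
  have hK : ∀ a b : Fin p,
      killingForm ℝ 𝔣 (X a) (X b) = if a = b then (-1 : ℝ) else 0 := by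
    intro a b
    have h := horth a b
    by_cases hab : a = b <;> simp [hab] at h ⊢ <;> linarith
  -- coordinates via the form
  have coord : ∀ (v : 𝔣) (c : Fin p), -(killingForm ℝ 𝔣 v (X c)) = X.repr v c := by
    intro v c
    conv_lhs => rw [← X.sum_repr v]
    rw [map_sum, LinearMap.sum_apply]
    simp [hK, Finset.sum_ite_eq', mul_comm]
  -- inner sum equals minus the Killing square norm of the bracket
  have inner : ∀ (w : 𝔣),
      ∑ c : Fin p, (-(killingForm ℝ 𝔣 w (X c))) ^ 2 = -(killingForm ℝ 𝔣 w w) := by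
    intro w
    have : killingForm ℝ 𝔣 w w
        = ∑ c : Fin p, X.repr w c * killingForm ℝ 𝔣 w (X c) := by
      have h0 : killingForm ℝ 𝔣 w w
          = killingForm ℝ 𝔣 w (∑ c : Fin p, X.repr w c • X c) := by
        rw [X.sum_repr]
      rw [h0, map_sum]
      refine Finset.sum_congr rfl fun c _ => ?_
      rw [map_smul, smul_eq_mul]
    rw [this, ← Finset.sum_neg_distrib]
    refine Finset.sum_congr rfl fun c _ => ?_
    rw [← coord w c]
    ring
  have key : ∀ a b : Fin p,
      -(killingForm ℝ 𝔣 ⁅X a, X b⁆ ⁅X a, X b⁆)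
        = killingForm ℝ 𝔣 (X b) ⁅X a, ⁅X a, X b⁆⁆ := by
    intro a b
    rw [LieModule.traceForm_apply_lie_apply']
    ring
  have hsum : ∀ a : Fin p,
      ∑ b : Fin p, killingForm ℝ 𝔣 (X b) ⁅X a, ⁅X a, X b⁆⁆ = 1 := by
    intro a
    set T : 𝔣 →ₗ[ℝ] 𝔣 := (LieAlgebra.ad ℝ 𝔣 (X a)) ∘ₗ (LieAlgebra.ad ℝ 𝔣 (X a)) with hT
    have h1 : ∀ b : Fin p, killingForm ℝ 𝔣 (X b) ⁅X a, ⁅X a, X b⁆⁆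
        = -(X.repr (T (X b)) b) := by
      intro b
      rw [← coord (T (X b)) b, neg_neg, LieModule.traceForm_comm]
      simp [hT, LieAlgebra.ad_apply]
    have h2 : LinearMap.trace ℝ 𝔣 T = ∑ b : Fin p, X.repr (T (X b)) b := by
      rw [LinearMap.trace_eq_matrix_trace ℝ X T, Matrix.trace]
      refine Finset.sum_congr rfl fun b _ => ?_
      rw [Matrix.diag_apply, LinearMap.toMatrix_apply]
    have h3 : LinearMap.trace ℝ 𝔣 T = killingForm ℝ 𝔣 (X a) (X a) :=
      (killingForm_apply_apply ℝ 𝔣 (X a) (X a)).symm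
    calc ∑ b : Fin p, killingForm ℝ 𝔣 (X b) ⁅X a, ⁅X a, X b⁆⁆
        = ∑ b : Fin p, -(X.repr (T (X b)) b) := Finset.sum_congr rfl fun b _ => h1 b
      _ = -(LinearMap.trace ℝ 𝔣 T) := by rw [h2, Finset.sum_neg_distrib]
      _ = 1 := by rw [h3, hK a a]; simp
  calc ∑ a : Fin p, ∑ b : Fin p, ∑ c : Fin p,
        (-(killingForm ℝ 𝔣 ⁅X a, X b⁆ (X c))) ^ 2
      = ∑ a : Fin p, ∑ b : Fin p, killingForm ℝ 𝔣 (X b) ⁅X a, ⁅X a, X b⁆⁆ := by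
        refine Finset.sum_congr rfl fun a _ => Finset.sum_congr rfl fun b _ => ?_
        rw [inner ⁅X a, X b⁆, key a b]
    _ = ∑ a : Fin p, (1 : ℝ) := Finset.sum_congr rfl fun a _ => hsum a
    _ = (p : ℝ) := by simp
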